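/- Let (W,S) be a Coxeter system, K an integral domain, and V a free K-module of finite rank with a K-linear W-action together with elements α_s ∈ V and α_s^∨ ∈ V* for each s ∈ S, satisfying ⟨α_s^∨, α_s⟩ = 2, s(v) = v − ⟨α_s^∨, v⟩α_s for all v ∈ V, α_s^∨ surjective, and α_s ≠ 0. If w ∈ W and s, s' ∈ S satisfy w s w⁻¹ = s', then w(α_s) = c·α_{s'} for some unit c ∈ K^×. -/
import Mathlib


/-- Given a Coxeter system `(W,S)`, an integral domain `K`, and a free `K`-module
`V` of finite rank with a linear `W`-action together with roots `α_s ∈ V` and coroots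
`α_s^∨ ∈ V*` satisfying `⟨α_s^∨,α_s⟩ = 2`, `s(v) = v − ⟨α_s^∨,v⟩α_s`, `α_s^∨` surjective and
`α_s ≠ 0`: if `w s w⁻¹ = s'` for `s, s' ∈ S` then `w(α_s) = c • α_{s'}` for a unit `c ∈ K^×`. -/
theorem statement0 {B W : Type} [Group W] [Finite B] {M : CoxeterMatrix B}
    (cs : CoxeterSystem M W)
    (K : Type) [CommRing K] [IsDomain K] [IsNoetherianRing K]
    (V : Type) [AddCommGroup V] [Module K V] [Module.Free K V] [Module.Finite K V]
    (ρ : Representation K W V)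
    (α : B → V) (cα : B → (V →ₗ[K] K))
    (h2 : ∀ i : B, cα i (α i) = 2)
    (hrefl : ∀ (i : B) (v : V), ρ (cs.simple i) v = v - cα i v • α i)
    (hsurj : ∀ i : B, Function.Surjective (cα i))
    (hne : ∀ i : B, α i ≠ 0)
    (w : W) (i i' : B) (hconj : w * cs.simple i * w⁻¹ = cs.simple i') :
    ∃ c : Kˣ, ρ w (α i) = (c : K) • α i' := by
  set β := ρ w (α i) with hβ
  have hinv : ∀ v : V, ρ w (ρ w⁻¹ v) = v := by
    intro v
    rw [← Module.End.mul_apply, ← map_mul, mul_inv_cancel, map_one, Module.End.one_apply]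
  have hinv' : ∀ v : V, ρ w⁻¹ (ρ w v) = v := by
    intro v
    rw [← Module.End.mul_apply, ← map_mul, inv_mul_cancel, map_one, Module.End.one_apply]
  have key : ∀ v : V, cα i' v • α i' = cα i (ρ w⁻¹ v) • β := by
    intro v
    have e1 : ρ (cs.simple i') v = v - cα i' v • α i' := hrefl i' v
    have e2 : ρ (cs.simple i') v = v - cα i (ρ w⁻¹ v) • β := by
      rw [← hconj, map_mul, map_mul]
      simp only [Module.End.mul_apply]
      rw [hrefl i (ρ w⁻¹ v), map_sub, map_smul, hinv]
    rw [e2] at e1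
    have := sub_right_injective e1
    exact this.symm
  obtain ⟨v0, hv0⟩ := hsurj i' 1
  obtain ⟨u, hu⟩ := hsurj i 1
  set a := cα i (ρ w⁻¹ v0) with ha
  set b := cα i' (ρ w u) with hb
  have ea : α i' = a • β := by
    have := key v0; rw [hv0, one_smul] at this; exact this
  have eb : β = b • α i' := by
    have := key (ρ w u)
    rw [hinv' u, hu, one_smul] at this
    exact this.symm
  have hab : (a * b - 1) • α i' = 0 := by
    have : α i' = (a * b) • α i' := by
      rw [mul_smul, ← eb, ← ea]
    rw [sub_smul, one_smul, ← this, sub_self]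
  have hab1 : a * b = 1 := by
    rcases smul_eq_zero.mp hab with h | h
    · exact sub_eq_zero.mp h
    · exact absurd h (hne i')
  exact ⟨⟨b, a, by rw [mul_comm]; exact hab1, hab1⟩, eb⟩
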